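/- Let α ∈ (1,2) and p ∈ ℤ. Then, as z → 0 in ℂ∖{0}, e^{pz}·((1−e^{−z})/z)^α·(1 + (1−e^{−z})/2)^α − [1 + p·z + ((3p²−2α)/6)·z² + ((2p³ + α(3−4p))/12)·z³] = O(z⁴); that is, there exist constants C > 0 and δ > 0 such that for all z ∈ ℂ with 0 < |z| < δ the modulus of the left-hand side is at most C·|z|⁴. -/

import Mathlib

open Complex Filter Asymptotics Finset

private lemma abs_le_one_ev : ∀ᶠ z : ℂ in nhds 0, ‖z‖ ≤ 1 := by
  filter_upwards [Metric.ball_mem_nhds (0:ℂ) one_pos] with z hz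
  simpa [Complex.dist_eq] using (Metric.mem_ball.mp hz).le

private lemma pow_isBigO {m n : ℕ} (h : n ≤ m) :
    (fun z : ℂ => z ^ m) =O[nhds 0] fun z : ℂ => z ^ n := by
  rw [isBigO_iff]
  refine ⟨1, ?_⟩
  filter_upwards [abs_le_one_ev] with z hz
  simp only [norm_pow, one_mul]
  exact pow_le_pow_of_le_one (norm_nonneg z) hz h

private lemma mulO {L : Filter ℂ} {f h : ℂ → ℂ} (hf : f =O[L] h) {g : ℂ → ℂ} {c : ℂ}
    (hg : Filter.Tendsto g L (nhds c)) : (fun z => f z * g z) =O[L] h := by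
  simpa using hf.mul (hg.isBigO_one ℂ)

private lemma expO (n : ℕ) (hn : 0 < n) :
    (fun z : ℂ => Complex.exp z - ∑ m ∈ range n, z ^ m / m.factorial)
      =O[nhds 0] fun z : ℂ => z ^ n := by
  rw [isBigO_iff]
  refine ⟨(n.succ : ℝ) * ((n.factorial : ℝ) * n)⁻¹, ?_⟩
  filter_upwards [abs_le_one_ev] with z hz
  simp only [norm_pow]
  rw [mul_comm]
  exact Complex.exp_bound hz hn

private lemma expO4 :
    (fun z : ℂ => Complex.exp z - (1 + z + z^2/2 + z^3/6)) =O[nhds 0] fun z : ℂ => z ^ 4 := by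
  have := expO 4 (by norm_num)
  refine this.congr (fun z => ?_) (fun _ => rfl)
  simp [Finset.sum_range_succ, Nat.factorial]

private lemma expO5 :
    (fun z : ℂ => Complex.exp z - (1 + z + z^2/2 + z^3/6 + z^4/24)) =O[nhds 0]
      fun z : ℂ => z ^ 5 := by
  have := expO 5 (by norm_num)
  refine this.congr (fun z => ?_) (fun _ => rfl)
  simp [Finset.sum_range_succ, Nat.factorial]



private lemma numO :
    (fun z : ℂ => (1 - Complex.exp (-z)) - (z - z^2/2 + z^3/6 - z^4/24)) =O[nhds 0]
      fun z : ℂ => z ^ 5 := by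
  have hneg : Filter.Tendsto (fun z : ℂ => -z) (nhds 0) (nhds 0) := by
    simpa using (continuous_neg.tendsto (0:ℂ))
  have h := (expO5.comp_tendsto hneg).neg_left
  have h2 : (fun z : ℂ => (1 - Complex.exp (-z)) - (z - z^2/2 + z^3/6 - z^4/24)) =O[nhds 0]
      (fun z : ℂ => -(z ^ 5)) := by
    refine h.congr (fun z => ?_) (fun z => ?_) <;> simp [Function.comp] <;> ring
  exact h2.of_neg_right

private lemma divO {f : ℂ → ℂ} {n : ℕ} (h : f =O[nhds 0] fun z : ℂ => z ^ (n+1)) :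
    (fun z : ℂ => f z / z) =O[nhdsWithin 0 {0}ᶜ] fun z : ℂ => z ^ n := by
  rw [isBigO_iff] at h ⊢
  obtain ⟨c, hc⟩ := h
  refine ⟨c, ?_⟩
  filter_upwards [hc.filter_mono nhdsWithin_le_nhds, self_mem_nhdsWithin] with z hz h0
  have hz0 : (0:ℝ) < ‖z‖ := by simpa [norm_pos_iff] using (h0 : z ≠ 0)
  rw [norm_div, div_le_iff₀ hz0]
  calc ‖f z‖ ≤ c * ‖z ^ (n+1)‖ := hz
    _ = c * ‖z ^ n‖ * ‖z‖ := by rw [pow_succ, norm_mul]; ring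

private lemma logO {L : Filter ℂ} {t : ℂ → ℂ} (htO : t =O[L] fun z : ℂ => z)
    (ht0 : Filter.Tendsto t L (nhds 0)) :
    (fun z => Complex.log (1 + t z) - (t z - (t z)^2/2 + (t z)^3/3)) =O[L]
      fun z : ℂ => z ^ 4 := by
  have step : (fun z => Complex.log (1 + t z) - (t z - (t z)^2/2 + (t z)^3/3)) =O[L]
      fun z => (t z) ^ 4 := by
    rw [isBigO_iff]
    refine ⟨1, ?_⟩
    have hhalf : ∀ᶠ z in L, ‖t z‖ ≤ 1/2 := by
      filter_upwards [ht0 (Metric.closedBall_mem_nhds 0 (by norm_num : (0:ℝ) < 1/2))] with z hz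
      simpa [Complex.dist_eq] using hz
    filter_upwards [hhalf] with z hz
    have h1 : ‖t z‖ < 1 := lt_of_le_of_lt hz (by norm_num)
    have hb := Complex.norm_log_sub_logTaylor_le 3 h1
    have hlt : Complex.logTaylor 4 (t z) = t z - (t z)^2/2 + (t z)^3/3 := by
      simp [Complex.logTaylor_succ, Complex.logTaylor_zero]
      ring
    rw [hlt] at hb
    refine hb.trans ?_
    have h2 : (1 - ‖t z‖)⁻¹ ≤ 2 := by
      rw [inv_le_comm₀ (by linarith) (by norm_num)]
      linarith
    have h3 : ‖(t z)^4‖ = ‖t z‖^4 := by rw [norm_pow]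
    rw [h3, one_mul]
    have h4 : (0:ℝ) ≤ ‖t z‖^4 := pow_nonneg (norm_nonneg _) 4
    calc ‖t z‖ ^ (3+1) * (1 - ‖t z‖)⁻¹ / (3+1) ≤ ‖t z‖^4 * 2 / 4 := by
          gcongr <;> push_cast <;> norm_num
      _ ≤ ‖t z‖^4 := by linarith
  exact step.trans (htO.pow 4)

private lemma cubicO {L : Filter ℂ} {t T h : ℂ → ℂ} (c2 c3 : ℂ)
    (hdiff : (fun z => t z - T z) =O[L] h)
    (ht0 : Filter.Tendsto t L (nhds 0)) (hT0 : Filter.Tendsto T L (nhds 0)) :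
    (fun z => (t z + c2*(t z)^2 + c3*(t z)^3) - (T z + c2*(T z)^2 + c3*(T z)^3)) =O[L] h := by
  have hcont : Continuous fun q : ℂ × ℂ =>
      1 + c2*(q.1 + q.2) + c3*(q.1^2 + q.1*q.2 + q.2^2) := by fun_prop
  have hg : Filter.Tendsto
      (fun z => 1 + c2*(t z + T z) + c3*((t z)^2 + t z * T z + (T z)^2)) L (nhds 1) := by
    have h2 := (hcont.tendsto ((0:ℂ),(0:ℂ))).comp (ht0.prodMk_nhds hT0)
    simpa [Function.comp_def] using h2
  refine (mulO hdiff hg).congr (fun z => ?_) (fun _ => rfl)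
  ring

private lemma polyO {Q : ℂ → ℂ} (hQ : Continuous Q) :
    (fun z : ℂ => z ^ 4 * Q z) =O[nhds 0] fun z : ℂ => z ^ 4 :=
  mulO (isBigO_refl _ _) (hQ.tendsto 0)

/-- Taylor expansion of the symbol of the shifted Lubich operator:
`e^{pz} ((1-e^{-z})/z)^α (1 + (1-e^{-z})/2)^α
  = 1 + p z + ((3p²-2α)/6) z² + ((2p³ + α(3-4p))/12) z³ + O(z⁴)` as `z → 0`. -/
theorem stmt3 (α : ℝ) (h1 : 1 < α) (h2 : α < 2) (p : ℤ) :
    ∃ C > (0 : ℝ), ∃ δ > (0 : ℝ), ∀ z : ℂ, 0 < ‖z‖ → ‖z‖ < δ →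
      ‖(Complex.exp ((p : ℂ) * z) * ((1 - Complex.exp (-z)) / z) ^ (α : ℂ) *
            (1 + (1 - Complex.exp (-z)) / 2) ^ (α : ℂ) -
          (1 + (p : ℂ) * z + ((3 * (p : ℂ) ^ 2 - 2 * (α : ℂ)) / 6) * z ^ 2 +
            ((2 * (p : ℂ) ^ 3 + (α : ℂ) * (3 - 4 * (p : ℂ))) / 12) * z ^ 3))‖ ≤
      C * ‖z‖ ^ 4 := by
  classical
  set L : Filter ℂ := nhdsWithin 0 {0}ᶜ with hL
  -- main objects
  set t : ℂ → ℂ := fun z => (1 - Complex.exp (-z)) / z - 1 with htdef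
  set T : ℂ → ℂ := fun z => -z/2 + z^2/6 - z^3/24 with hTdef
  set r : ℂ → ℂ := fun z => (1 - Complex.exp (-z)) / 2 with hrdef
  set R : ℂ → ℂ := fun z => z/2 - z^2/4 + z^3/12 with hRdef
  -- t - T = O(z^4) on L
  have htT : (fun z => t z - T z) =O[L] fun z : ℂ => z ^ 4 := by
    have hdiv := divO (n := 4) numO
    refine hdiv.congr' ?_ EventuallyEq.rfl
    filter_upwards [self_mem_nhdsWithin] with z hz
    have hz0 : (z:ℂ) ≠ 0 := hz
    simp only [htdef, hTdef]
    field_simp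
    ring
  have hT0 : Filter.Tendsto T L (nhds 0) := by
    have hc : Continuous T := by simp only [hTdef]; fun_prop
    have := (hc.tendsto 0).mono_left (nhdsWithin_le_nhds (s := {0}ᶜ))
    simpa [hTdef] using this
  have hTO : T =O[nhds 0] fun z : ℂ => z := by
    have : (fun z : ℂ => z * (-1/2 + z/6 - z^2/24)) =O[nhds 0] fun z : ℂ => z := by
      have hc : Continuous fun z : ℂ => -1/2 + z/6 - z^2/24 := by fun_prop
      exact mulO (isBigO_refl _ _) (hc.tendsto 0)
    refine this.congr (fun z => ?_) (fun _ => rfl)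
    simp only [hTdef]; ring
  have htO : t =O[L] fun z : ℂ => z := by
    have h4 : (fun z : ℂ => z ^ 4) =O[nhds 0] fun z : ℂ => z := by
      simpa using pow_isBigO (m := 4) (n := 1) (by norm_num)
    have := (htT.trans (h4.mono nhdsWithin_le_nhds)).add (hTO.mono nhdsWithin_le_nhds)
    simpa using this
  have ht0 : Filter.Tendsto t L (nhds 0) := by
    refine htO.trans_tendsto ?_
    exact (continuous_id.tendsto (0:ℂ)).mono_left nhdsWithin_le_nhds
  -- log u expansion
  have hlogu : (fun z => Complex.log ((1 - Complex.exp (-z)) / z) - (-z/2 + z^2/24))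
      =O[L] fun z : ℂ => z ^ 4 := by
    have A := logO htO ht0
    have B := cubicO (L := L) (h := fun z : ℂ => z ^ 4) (-(1/2) : ℂ) (1/3) htT ht0 hT0
    have C : (fun z : ℂ => z^4 * (1/144 - 5/288*z + 79/10368*z^2 - 7/3456*z^3
        + 1/3456*z^4 - 1/41472*z^5)) =O[L] fun z : ℂ => z ^ 4 := by
      refine (polyO ?_).mono nhdsWithin_le_nhds
      fun_prop
    refine ((A.add B).add C).congr (fun z => ?_) (fun _ => rfl)
    have harg : (1:ℂ) + t z = (1 - Complex.exp (-z))/z := by simp only [htdef]; ring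
    rw [harg]
    simp only [htdef, hTdef]
    ring
  -- r and log v expansion
  have hr0 : Filter.Tendsto r (nhds 0) (nhds 0) := by
    have hc : Continuous r := by simp only [hrdef]; fun_prop
    have := hc.tendsto 0
    simpa [hrdef] using this
  have hR0 : Filter.Tendsto R (nhds 0) (nhds 0) := by
    have hc : Continuous R := by simp only [hRdef]; fun_prop
    have := hc.tendsto 0
    simpa [hRdef] using this
  have hrR : (fun z => r z - R z) =O[nhds 0] fun z : ℂ => z ^ 4 := by
    have h1 := (numO.const_mul_left (1/2 : ℂ)).trans (pow_isBigO (by norm_num : 4 ≤ 5))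
    have h2 : (fun z : ℂ => z^4 * (-1/48 : ℂ)) =O[nhds 0] fun z : ℂ => z ^ 4 :=
      polyO continuous_const
    refine (h1.add h2).congr (fun z => ?_) (fun _ => rfl)
    simp only [hrdef, hRdef]
    ring
  have hRO : R =O[nhds 0] fun z : ℂ => z := by
    have : (fun z : ℂ => z * (1/2 - z/4 + z^2/12)) =O[nhds 0] fun z : ℂ => z := by
      have hc : Continuous fun z : ℂ => 1/2 - z/4 + z^2/12 := by fun_prop
      exact mulO (isBigO_refl _ _) (hc.tendsto 0)
    refine this.congr (fun z => ?_) (fun _ => rfl)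
    simp only [hRdef]; ring
  have hrO : r =O[nhds 0] fun z : ℂ => z := by
    have h4 : (fun z : ℂ => z ^ 4) =O[nhds 0] fun z : ℂ => z := by
      simpa using pow_isBigO (m := 4) (n := 1) (by norm_num)
    have := (hrR.trans h4).add hRO
    simpa using this
  have hlogv : (fun z => Complex.log (1 + r z) - (z/2 - 3*z^2/8 + z^3/4))
      =O[nhds 0] fun z : ℂ => z ^ 4 := by
    have A := logO hrO hr0
    have B := cubicO (L := nhds 0) (h := fun z : ℂ => z ^ 4) (-(1/2) : ℂ) (1/3) hrR hr0 hR0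
    have C : (fun z : ℂ => z^4 * (-13/96 + 7/96*z - 17/576*z^2 + 5/576*z^3
        - 1/576*z^4 + 1/5184*z^5)) =O[nhds 0] fun z : ℂ => z ^ 4 := by
      refine polyO ?_
      fun_prop
    refine ((A.add B).add C).congr (fun z => ?_) (fun _ => rfl)
    simp only [hRdef]
    ring
  -- the log of the full symbol
  set w : ℂ → ℂ := fun z => (p:ℂ)*z + (α:ℂ)*Complex.log ((1 - Complex.exp (-z))/z)
      + (α:ℂ)*Complex.log (1 + r z) with hwdef
  set W : ℂ → ℂ := fun z => (p:ℂ)*z - (α:ℂ)*z^2/3 + (α:ℂ)*z^3/4 with hWdef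
  have hwW : (fun z => w z - W z) =O[L] fun z : ℂ => z ^ 4 := by
    have hh := (hlogu.const_mul_left (α:ℂ)).add
      ((hlogv.mono nhdsWithin_le_nhds).const_mul_left (α:ℂ))
    refine hh.congr (fun z => ?_) (fun _ => rfl)
    simp only [hwdef, hWdef]
    ring
  have hW0 : Filter.Tendsto W (nhds 0) (nhds 0) := by
    have hc : Continuous W := by simp only [hWdef]; fun_prop
    simpa [hWdef] using hc.tendsto 0
  have hW0L : Filter.Tendsto W L (nhds 0) := hW0.mono_left nhdsWithin_le_nhds
  have hWO : W =O[nhds 0] fun z : ℂ => z := by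
    have hb : (fun z : ℂ => z * ((p:ℂ) - (α:ℂ)*z/3 + (α:ℂ)*z^2/4)) =O[nhds 0]
        fun z : ℂ => z := by
      have hc : Continuous fun z : ℂ => (p:ℂ) - (α:ℂ)*z/3 + (α:ℂ)*z^2/4 := by fun_prop
      exact mulO (isBigO_refl _ _) (hc.tendsto 0)
    refine hb.congr (fun z => ?_) (fun _ => rfl)
    simp only [hWdef]; ring
  have hz4O1 : (fun z : ℂ => z ^ 4) =O[nhds 0] fun z : ℂ => z := by
    simpa using pow_isBigO (m := 4) (n := 1) (by norm_num)
  have hz4t : Filter.Tendsto (fun z : ℂ => z ^ 4) L (nhds 0) := by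
    have := ((continuous_pow 4).tendsto (0:ℂ)).mono_left
      (nhdsWithin_le_nhds (s := ({0}ᶜ : Set ℂ)))
    simpa using this
  have hw0 : Filter.Tendsto w L (nhds 0) := by
    have h1 : Filter.Tendsto (fun z => w z - W z) L (nhds 0) := hwW.trans_tendsto hz4t
    have := h1.add hW0L
    simpa using this
  have hwO : w =O[L] fun z : ℂ => z := by
    have := (hwW.trans (hz4O1.mono nhdsWithin_le_nhds)).add (hWO.mono nhdsWithin_le_nhds)
    simpa using this
  have hexpw : (fun z => Complex.exp (w z) - (1 + w z + (w z)^2/2 + (w z)^3/6)) =O[L]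
      fun z : ℂ => z ^ 4 := by
    have h1 := expO4.comp_tendsto hw0
    exact (h1.congr (fun z => rfl) (fun z => rfl)).trans (hwO.pow 4)
  have hcubic := cubicO (L := L) (h := fun z : ℂ => z^4) (1/2 : ℂ) (1/6) hwW hw0 hW0L
  have hPW : (fun z => (1 + W z + (W z)^2/2 + (W z)^3/6) -
      (1 + (p : ℂ) * z + ((3 * (p : ℂ) ^ 2 - 2 * (α : ℂ)) / 6) * z ^ 2 +
        ((2 * (p : ℂ) ^ 3 + (α : ℂ) * (3 - 4 * (p : ℂ))) / 12) * z ^ 3)) =O[L]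
      fun z : ℂ => z ^ 4 := by
    have hQ : Continuous fun z : ℂ =>
        ((α:ℂ)*(p:ℂ)/4 + (α:ℂ)^2/18 - (α:ℂ)*(p:ℂ)^2/6)
        + ((α:ℂ)*(p:ℂ)^2/8 - (α:ℂ)^2/12 + (α:ℂ)^2*(p:ℂ)/18) * z
        + ((α:ℂ)^2/32 - (α:ℂ)^2*(p:ℂ)/12 - (α:ℂ)^3/162) * z^2
        + ((α:ℂ)^2*(p:ℂ)/32 + (α:ℂ)^3/72) * z^3
        - ((α:ℂ)^3/96) * z^4 + ((α:ℂ)^3/384) * z^5 := by fun_prop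
    refine ((polyO hQ).mono nhdsWithin_le_nhds).congr (fun z => ?_) (fun _ => rfl)
    simp only [hWdef]
    ring
  -- identify the symbol with exp (w z)
  have hune : ∀ᶠ z in L, ((1 - Complex.exp (-z))/z) ≠ 0 := by
    filter_upwards [ht0 (Metric.ball_mem_nhds 0 one_pos)] with z hz
    intro hzero
    have h1 : (1:ℂ) + t z = (1 - Complex.exp (-z))/z := by simp only [htdef]; ring
    have h2 : t z = -1 := by
      have := h1.trans hzero
      linear_combination this
    have h3 : ‖t z‖ < 1 := by simpa [Complex.dist_eq] using hz
    rw [h2] at h3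
    simp at h3
  have hvne : ∀ᶠ z in L, ((1:ℂ) + r z) ≠ 0 := by
    filter_upwards [(hr0.mono_left nhdsWithin_le_nhds) (Metric.ball_mem_nhds 0 one_pos)]
      with z hz
    intro hzero
    have h2 : r z = -1 := by linear_combination hzero
    have h3 : ‖r z‖ < 1 := by simpa [Complex.dist_eq] using hz
    rw [h2] at h3
    simp at h3
  have heq : ∀ᶠ z in L, Complex.exp ((p:ℂ)*z) * ((1 - Complex.exp (-z))/z) ^ (α:ℂ)
      * (1 + (1 - Complex.exp (-z))/2) ^ (α:ℂ) = Complex.exp (w z) := by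
    filter_upwards [hune, hvne] with z hu hv
    have h1v : (1:ℂ) + (1 - Complex.exp (-z))/2 = 1 + r z := by simp only [hrdef]
    rw [h1v, Complex.cpow_def_of_ne_zero hu, Complex.cpow_def_of_ne_zero hv,
      ← Complex.exp_add, ← Complex.exp_add]
    congr 1
    simp only [hwdef]
    ring
  have hfinal : (fun z => Complex.exp ((p:ℂ)*z) * ((1 - Complex.exp (-z))/z) ^ (α:ℂ)
      * (1 + (1 - Complex.exp (-z))/2) ^ (α:ℂ) -
      (1 + (p : ℂ) * z + ((3 * (p : ℂ) ^ 2 - 2 * (α : ℂ)) / 6) * z ^ 2 +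
        ((2 * (p : ℂ) ^ 3 + (α : ℂ) * (3 - 4 * (p : ℂ))) / 12) * z ^ 3)) =O[L]
      fun z : ℂ => z ^ 4 := by
    have hsum := (hexpw.add hcubic).add hPW
    have h2 : (fun z => Complex.exp (w z) -
        (1 + (p : ℂ) * z + ((3 * (p : ℂ) ^ 2 - 2 * (α : ℂ)) / 6) * z ^ 2 +
          ((2 * (p : ℂ) ^ 3 + (α : ℂ) * (3 - 4 * (p : ℂ))) / 12) * z ^ 3)) =O[L]
        fun z : ℂ => z^4 := by
      refine hsum.congr (fun z => ?_) (fun _ => rfl)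
      ring
    refine h2.congr' ?_ EventuallyEq.rfl
    filter_upwards [heq] with z hz
    rw [← hz]
  rw [isBigO_iff] at hfinal
  obtain ⟨c, hc⟩ := hfinal
  obtain ⟨ε, hε, hsub⟩ := Metric.mem_nhdsWithin_iff.mp hc
  refine ⟨max c 1, lt_of_lt_of_le zero_lt_one (le_max_right c 1), ε, hε, fun z hz0 hzδ => ?_⟩
  have hzne : z ≠ 0 := by
    intro h
    rw [h] at hz0
    simp at hz0
  have hzmem : z ∈ Metric.ball (0:ℂ) ε ∩ {0}ᶜ := by
    constructor
    · simpa [Complex.dist_eq] using hzδ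
    · simpa using hzne
  have hb := hsub hzmem
  simp only [Set.mem_setOf_eq, norm_pow] at hb
  refine hb.trans ?_
  have h4 : (0:ℝ) ≤ ‖z‖ ^ 4 := pow_nonneg (norm_nonneg z) 4
  exact mul_le_mul_of_nonneg_right (le_max_left c 1) h4
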